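/- Let Ω ⊂ ℝ^N be a bounded domain, 2 < p < 2N/(N-2), λ₁, λ₂ ∈ ℝ, and β < 1. Then there exists a constant C_β > 0 such that every pair (u,v) ∈ H¹₀(Ω) × H¹₀(Ω), (u,v) ≠ (0,0), satisfying ∫_Ω (|∇u|² − λ₁u² + |∇v|² − λ₂v²) + ∫_Ω (|u|^p + |v|^p) − 2β∫_Ω |u|^{p/2}|v|^{p/2} = 0 obeys ‖∇u‖₂² + ‖∇v‖₂² ≤ C_β². Moreover, if β ≤ 0 one may take C_β ≤ C₀ with C₀ independent of β. -/

import Mathlib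

set_option maxHeartbeats 1000000


open MeasureTheory Real Filter Topology Bornology

noncomputable section

abbrev Euc (N : ℕ) := EuclideanSpace ℝ (Fin N)

/-- A (loose) model of membership in `H¹₀(Ω)` for real functions on `ℝ^N`:
zero outside `Ω`, differentiable on `Ω`, with the natural integrability properties. -/
def H10 {N : ℕ} (Ω : Set (Euc N)) (p : ℝ) (u : Euc N → ℝ) : Prop :=
  (∀ x ∉ Ω, u x = 0) ∧ DifferentiableOn ℝ u Ω ∧
  IntegrableOn (fun x => ‖gradient u x‖ ^ 2) Ω ∧
  IntegrableOn (fun x => (u x) ^ 2) Ω ∧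
  IntegrableOn (fun x => |u x| ^ p) Ω

/-- Squared Dirichlet norm `‖∇u‖₂²`. -/
def nrm2 {N : ℕ} (Ω : Set (Euc N)) (u : Euc N → ℝ) : ℝ :=
  ∫ x in Ω, ‖gradient u x‖ ^ 2

/-- The quadratic part `Q(u,v) = ∫ |∇u|² - λ₁u² + |∇v|² - λ₂v²`. -/
def Qf {N : ℕ} (Ω : Set (Euc N)) (l1 l2 : ℝ) (u v : Euc N → ℝ) : ℝ :=
  ∫ x in Ω, (‖gradient u x‖ ^ 2 - l1 * (u x) ^ 2 + (‖gradient v x‖ ^ 2 - l2 * (v x) ^ 2))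

/-- The `p`-homogeneous part `P(u,v) = ∫ |u|^p + |v|^p - 2β ∫ |u|^{p/2}|v|^{p/2}`. -/
def Pf {N : ℕ} (Ω : Set (Euc N)) (p β : ℝ) (u v : Euc N → ℝ) : ℝ :=
  (∫ x in Ω, (|u x| ^ p + |v x| ^ p)) - 2 * β * ∫ x in Ω, |u x| ^ (p / 2) * |v x| ^ (p / 2)

/-- The energy functional `J_β` of the logistic system. -/
def Jf {N : ℕ} (Ω : Set (Euc N)) (p l1 l2 β : ℝ) (u v : Euc N → ℝ) : ℝ :=
  (1 / 2) * Qf Ω l1 l2 u v + (1 / p) * ∫ x in Ω, (|u x| ^ p + |v x| ^ p)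
    - (2 * β / p) * ∫ x in Ω, |u x| ^ (p / 2) * |v x| ^ (p / 2)

/-- The Laplacian `Δu` as the sum of the pure second derivatives. -/
def lap {N : ℕ} (u : Euc N → ℝ) (x : Euc N) : ℝ :=
  ∑ i : Fin N, iteratedFDeriv ℝ 2 u x ![EuclideanSpace.single i 1, EuclideanSpace.single i 1]

/-- The Gateaux derivative `J_β'(u,v)(φ,ψ)` as in (1.5) of the paper. -/
def Jd {N : ℕ} (Ω : Set (Euc N)) (p l1 l2 β : ℝ) (u v φ ψ : Euc N → ℝ) : ℝ :=
  (∫ x in Ω, ((inner ℝ (gradient u x) (gradient φ x) : ℝ)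
      + (inner ℝ (gradient v x) (gradient ψ x) : ℝ) - l1 * u x * φ x - l2 * v x * ψ x)) +
  (∫ x in Ω, (|u x| ^ (p - 2) * u x * φ x + |v x| ^ (p - 2) * v x * ψ x)) -
  β * ∫ x in Ω, (|u x| ^ (p / 2 - 2) * u x * |v x| ^ (p / 2) * φ x
      + |u x| ^ (p / 2) * |v x| ^ (p / 2 - 2) * v x * ψ x)

/-- The scalar logistic energy `J_i(u) = ½∫(|∇u|² - λu²) + (1/p)∫|u|^p`. -/
def J1e {N : ℕ} (Ω : Set (Euc N)) (p l : ℝ) (u : Euc N → ℝ) : ℝ :=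
  (1 / 2) * ∫ x in Ω, (‖gradient u x‖ ^ 2 - l * (u x) ^ 2) + (1 / p) * ∫ x in Ω, |u x| ^ p

/-- The second derivative quadratic form `D²J₁(w)[e,e]`. -/
def D2e {N : ℕ} (Ω : Set (Euc N)) (p l : ℝ) (w e : Euc N → ℝ) : ℝ :=
  (∫ x in Ω, (‖gradient e x‖ ^ 2 - l * (e x) ^ 2)) + (p - 1) * ∫ x in Ω, (w x) ^ (p - 2) * (e x) ^ 2


/-- Auxiliary pure-real algebra lemma. -/
lemma my_alg {G A D γ r : ℝ} (hG : 0 ≤ G) (hA : 0 ≤ A) (hD : 0 ≤ D) (hγ : 0 < γ)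
    (hr0 : 0 < r) (hr1 : r < 1) (h : G + γ * A ≤ D * A ^ r) :
    G ≤ D * max 1 ((D / γ) ^ (r / (1 - r))) := by
  have hAr : A ^ r ≤ max 1 ((D/γ)^(r/(1-r))) := by
    rcases le_or_gt A 1 with hA1 | hA1
    · exact le_max_of_le_left (Real.rpow_le_one hA hA1 hr0.le)
    · refine le_max_of_le_right ?_
      have hApos : (0:ℝ) < A := lt_trans one_pos hA1
      have hArpos : 0 < A ^ r := Real.rpow_pos_of_pos hApos r
      have hgA : γ * A ≤ D * A ^ r := by nlinarith
      have h2 : A ^ (1 - r) ≤ D / γ := by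
        rw [Real.rpow_sub hApos, Real.rpow_one, div_le_div_iff₀ hArpos hγ]
        nlinarith
      calc A ^ r = (A ^ (1-r)) ^ (r/(1-r)) := by
            rw [← Real.rpow_mul hApos.le]
            congr 1
            rw [mul_div_assoc', mul_comm, mul_div_assoc]
            rw [div_self (by linarith : (1:ℝ)-r ≠ 0), mul_one]
        _ ≤ (D/γ)^(r/(1-r)) :=
            Real.rpow_le_rpow (Real.rpow_nonneg hApos.le _) h2
              (by apply div_nonneg hr0.le; linarith)
  have h3 : G ≤ D * A ^ r := by nlinarith
  exact h3.trans (mul_le_mul_of_nonneg_left hAr hD)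

/-- Auxiliary Hölder inequality: `∫u² ≤ (∫|u|^p)^{2/p} μ(univ)^{1-2/p}`. -/
lemma my_holder {X : Type*} [MeasurableSpace X] (μ : Measure X) [IsFiniteMeasure μ]
    (p : ℝ) (hp : 2 < p) (u : X → ℝ) (h2 : Integrable (fun x => (u x)^2) μ)
    (hpint : Integrable (fun x => |u x|^p) μ) :
    ∫ x, (u x)^2 ∂μ ≤ (∫ x, |u x|^p ∂μ) ^ (2/p) * (μ Set.univ).toReal ^ (1 - 2/p) := by
  have hp2 : (1:ℝ) < p/2 := by linarith
  have hpq : (p/2).HolderConjugate (Real.conjExponent (p/2)) := .conjExponent hp2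
  set q := Real.conjExponent (p/2) with hq
  have hsqp : ∀ x, ((u x)^2) ^ (p/2) = |u x| ^ p := by
    intro x
    rw [← sq_abs, ← Real.rpow_natCast |u x| 2, ← Real.rpow_mul (abs_nonneg _)]
    congr 1
    ring
  have hmem : MemLp (fun x => (u x)^2) (ENNReal.ofReal (p/2)) μ := by
    refine ⟨h2.aestronglyMeasurable, ?_⟩
    rw [eLpNorm_lt_top_iff_lintegral_rpow_enorm_lt_top (by simp [ENNReal.ofReal_eq_zero]; linarith)
      (by simp)]
    have heq : ∀ x, (‖(u x)^2‖ₑ ^ (ENNReal.ofReal (p/2)).toReal)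
        = ENNReal.ofReal (|u x|^p) := by
      intro x
      rw [ENNReal.toReal_ofReal (by linarith), ← ofReal_norm,
        Real.norm_of_nonneg (sq_nonneg _), ← hsqp x]
      rw [← ENNReal.ofReal_rpow_of_nonneg (sq_nonneg (u x)) (show (0:ℝ) ≤ p/2 by linarith)]
    simp_rw [heq]
    exact hpint.lintegral_lt_top
  have hone : MemLp (fun _ : X => (1:ℝ)) (ENNReal.ofReal q) μ := memLp_const 1
  have hH := integral_mul_le_Lp_mul_Lq_of_nonneg hpq
    (Filter.Eventually.of_forall fun x => sq_nonneg (u x))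
    (Filter.Eventually.of_forall fun _ => zero_le_one) hmem hone
  simp only [mul_one, Real.one_rpow] at hH
  rw [integral_const, smul_eq_mul, mul_one] at hH
  have h1q : 1/q = 1 - 2/p := by
    have h := hpq.inv_add_inv_eq_one
    rw [inv_div] at h
    rw [one_div]
    linarith
  calc ∫ x, (u x)^2 ∂μ
      ≤ (∫ x, ((u x)^2) ^ (p/2) ∂μ) ^ (1/(p/2)) * ((μ Set.univ).toReal) ^ (1/q) := hH
    _ = (∫ x, |u x|^p ∂μ) ^ (2/p) * (μ Set.univ).toReal ^ (1 - 2/p) := by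
        rw [h1q, one_div_div]
        congr 2
        exact integral_congr_ae (Filter.Eventually.of_forall fun x => hsqp x)

/-- The constant used in the bound. -/
def Dc {N : ℕ} (Ω : Set (Euc N)) (p l1 l2 : ℝ) : ℝ :=
  2 * (max (max l1 l2) 0 + 1) * ((MeasureTheory.volume Ω).toReal ^ (1 - 2/p))

lemma Dc_nonneg {N : ℕ} (Ω : Set (Euc N)) (p l1 l2 : ℝ) : 0 ≤ Dc Ω p l1 l2 := by
  unfold Dc
  have h0 : (0:ℝ) ≤ max (max l1 l2) 0 + 1 := by
    have := le_max_right (max l1 l2) (0:ℝ); linarith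
  have h1 : (0:ℝ) ≤ ((MeasureTheory.volume Ω).toReal ^ (1 - 2/p)) :=
    Real.rpow_nonneg ENNReal.toReal_nonneg _
  nlinarith

/-- The main estimate on the Nehari set. -/
lemma my_est {N : ℕ} (Ω : Set (Euc N)) (hΩb : IsBounded Ω) (p l1 l2 : ℝ) (hp1 : 2 < p)
    (β : ℝ) (hβ : β < 1) (u v : Euc N → ℝ) (hu : H10 Ω p u) (hv : H10 Ω p v)
    (hne : Qf Ω l1 l2 u v + Pf Ω p β u v = 0) :
    nrm2 Ω u + nrm2 Ω v ≤
      Dc Ω p l1 l2 * max 1 ((Dc Ω p l1 l2 / (1 - max β 0)) ^ ((2/p)/(1-2/p))) := by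
  obtain ⟨hu0, hud, huG, hu2, hup⟩ := hu
  obtain ⟨hv0, hvd, hvG, hv2, hvp⟩ := hv
  haveI : IsFiniteMeasure (volume.restrict Ω) :=
    ⟨by rw [Measure.restrict_apply_univ]; exact hΩb.measure_lt_top⟩
  set M : ℝ := (MeasureTheory.volume Ω).toReal ^ (1 - 2/p) with hMdef
  set Λ : ℝ := max (max l1 l2) 0 + 1 with hΛdef
  set Iu : ℝ := ∫ x in Ω, (u x)^2 with hIudef
  set Iv : ℝ := ∫ x in Ω, (v x)^2 with hIvdef
  set A : ℝ := ∫ x in Ω, (|u x| ^ p + |v x| ^ p) with hAdef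
  set B : ℝ := ∫ x in Ω, |u x| ^ (p/2) * |v x| ^ (p/2) with hBdef
  have hQ : Qf Ω l1 l2 u v = nrm2 Ω u - l1 * Iu + (nrm2 Ω v - l2 * Iv) := by
    unfold Qf nrm2
    rw [hIudef, hIvdef,
      integral_add (f := fun x => ‖gradient u x‖ ^ 2 - l1 * (u x)^2)
        (g := fun x => ‖gradient v x‖ ^ 2 - l2 * (v x)^2)
        (Integrable.sub huG (hu2.const_mul l1)) (Integrable.sub hvG (hv2.const_mul l2)),
      integral_sub (f := fun x => ‖gradient u x‖ ^ 2) (g := fun x => l1 * (u x)^2)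
        huG (hu2.const_mul l1),
      integral_sub (f := fun x => ‖gradient v x‖ ^ 2) (g := fun x => l2 * (v x)^2)
        hvG (hv2.const_mul l2),
      integral_const_mul, integral_const_mul]
  have hP : Pf Ω p β u v = A - 2 * β * B := rfl
  have hGu : 0 ≤ nrm2 Ω u := integral_nonneg fun x => by positivity
  have hGv : 0 ≤ nrm2 Ω v := integral_nonneg fun x => by positivity
  have hIu0 : 0 ≤ Iu := integral_nonneg fun x => sq_nonneg _
  have hIv0 : 0 ≤ Iv := integral_nonneg fun x => sq_nonneg _
  have hA0 : 0 ≤ A := integral_nonneg fun x => by positivity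
  have hB0 : 0 ≤ B := integral_nonneg fun x =>
    mul_nonneg (Real.rpow_nonneg (abs_nonneg _) _) (Real.rpow_nonneg (abs_nonneg _) _)
  have hAint : Integrable (fun x => |u x| ^ p + |v x| ^ p) (volume.restrict Ω) := hup.add hvp
  have hAu_le : (∫ x in Ω, |u x| ^ p) ≤ A :=
    integral_mono hup hAint fun x =>
      le_add_of_nonneg_right (Real.rpow_nonneg (abs_nonneg _) _)
  have hAv_le : (∫ x in Ω, |v x| ^ p) ≤ A :=
    integral_mono hvp hAint fun x =>
      le_add_of_nonneg_left (Real.rpow_nonneg (abs_nonneg _) _)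
  have hsq : ∀ (w : Euc N → ℝ) x, (|w x| ^ (p/2))^2 = |w x| ^ p := by
    intro w x
    rw [← Real.rpow_natCast (|w x| ^ (p/2)) 2, ← Real.rpow_mul (abs_nonneg _)]
    congr 1
    ring
  have hBA : B ≤ A / 2 := by
    have h1 : B ≤ ∫ x in Ω, (|u x| ^ p + |v x| ^ p)/2 := by
      refine integral_mono_of_nonneg (Filter.Eventually.of_forall fun x =>
        mul_nonneg (Real.rpow_nonneg (abs_nonneg _) _) (Real.rpow_nonneg (abs_nonneg _) _))
        (hAint.div_const 2) (Filter.Eventually.of_forall fun x => ?_)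
      have ha := hsq u x
      have hb := hsq v x
      nlinarith [sq_nonneg (|u x| ^ (p/2) - |v x| ^ (p/2))]
    rwa [integral_div] at h1
  set βp : ℝ := max β 0 with hβpdef
  have hγ0 : 0 < 1 - βp := by
    have : βp < 1 := max_lt hβ one_pos
    linarith
  have h2βB : 2 * β * B ≤ βp * A := by
    rcases le_or_gt β 0 with hβ0 | hβ0
    · have : βp = 0 := max_eq_right hβ0
      rw [this]
      nlinarith
    · have : βp = β := max_eq_left hβ0.le
      rw [this]
      nlinarith
  have hl1 : l1 ≤ Λ := by
    have h := (le_max_left l1 l2).trans (le_max_left (max l1 l2) 0)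
    rw [hΛdef]; linarith
  have hl2 : l2 ≤ Λ := by
    have h := (le_max_right l1 l2).trans (le_max_left (max l1 l2) 0)
    rw [hΛdef]; linarith
  have hΛ0 : 0 < Λ := by
    have h := le_max_right (max l1 l2) (0:ℝ)
    rw [hΛdef]; linarith
  -- the key inequality G + γ A ≤ Λ (Iu + Iv)
  have hkey : nrm2 Ω u + nrm2 Ω v + (1 - βp) * A ≤ Λ * (Iu + Iv) := by
    rw [hQ, hP] at hne
    have e1 : l1 * Iu ≤ Λ * Iu := mul_le_mul_of_nonneg_right hl1 hIu0
    have e2 : l2 * Iv ≤ Λ * Iv := mul_le_mul_of_nonneg_right hl2 hIv0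
    nlinarith
  -- Hölder bounds
  have hHu : Iu ≤ A ^ (2/p) * M := by
    have h := my_holder (volume.restrict Ω) p hp1 u hu2 hup
    rw [Measure.restrict_apply_univ] at h
    refine h.trans ?_
    apply mul_le_mul_of_nonneg_right _ (Real.rpow_nonneg ENNReal.toReal_nonneg _)
    exact Real.rpow_le_rpow (integral_nonneg fun x => Real.rpow_nonneg (abs_nonneg _) _)
      hAu_le (by positivity)
  have hHv : Iv ≤ A ^ (2/p) * M := by
    have h := my_holder (volume.restrict Ω) p hp1 v hv2 hvp
    rw [Measure.restrict_apply_univ] at h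
    refine h.trans ?_
    apply mul_le_mul_of_nonneg_right _ (Real.rpow_nonneg ENNReal.toReal_nonneg _)
    exact Real.rpow_le_rpow (integral_nonneg fun x => Real.rpow_nonneg (abs_nonneg _) _)
      hAv_le (by positivity)
  have hM0 : 0 ≤ M := Real.rpow_nonneg ENNReal.toReal_nonneg _
  have hDeq : Dc Ω p l1 l2 = 2 * Λ * M := rfl
  have hmain : nrm2 Ω u + nrm2 Ω v + (1 - βp) * A ≤ Dc Ω p l1 l2 * A ^ (2/p) := by
    rw [hDeq]
    nlinarith
  have hr0 : (0:ℝ) < 2/p := by positivity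
  have hr1 : (2:ℝ)/p < 1 := by rw [div_lt_one (by linarith)]; linarith
  exact my_alg (by linarith) hA0 (Dc_nonneg Ω p l1 l2) hγ0 hr0 hr1 hmain


theorem stmt_0 {N : ℕ} (hN : 2 ≤ N) (Ω : Set (Euc N)) (hΩo : IsOpen Ω) (hΩb : IsBounded Ω)
    (p l1 l2 : ℝ) (hp1 : 2 < p) (hp2 : p < 2 * (N : ℝ) / ((N : ℝ) - 2)) :
    (∀ β : ℝ, β < 1 → ∃ C : ℝ, 0 < C ∧ ∀ u v : Euc N → ℝ, H10 Ω p u → H10 Ω p v →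
      ¬ (∀ x ∈ Ω, u x = 0 ∧ v x = 0) →
      Qf Ω l1 l2 u v + Pf Ω p β u v = 0 →
      nrm2 Ω u + nrm2 Ω v ≤ C ^ 2) ∧
    (∃ C0 : ℝ, 0 < C0 ∧ ∀ β : ℝ, β ≤ 0 → ∀ u v : Euc N → ℝ, H10 Ω p u → H10 Ω p v →
      ¬ (∀ x ∈ Ω, u x = 0 ∧ v x = 0) →
      Qf Ω l1 l2 u v + Pf Ω p β u v = 0 →
      nrm2 Ω u + nrm2 Ω v ≤ C0 ^ 2) := by
  have key : ∀ β : ℝ, β < 1 → ∀ u v : Euc N → ℝ, H10 Ω p u → H10 Ω p v →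
      Qf Ω l1 l2 u v + Pf Ω p β u v = 0 →
      nrm2 Ω u + nrm2 Ω v ≤
        Dc Ω p l1 l2 * max 1 ((Dc Ω p l1 l2 / (1 - max β 0)) ^ ((2/p)/(1-2/p))) :=
    fun β hβ u v hu hv h => my_est Ω hΩb p l1 l2 hp1 β hβ u v hu hv h
  have hD0 := Dc_nonneg Ω p l1 l2
  constructor
  · intro β hβ
    set E : ℝ := Dc Ω p l1 l2 * max 1 ((Dc Ω p l1 l2 / (1 - max β 0)) ^ ((2/p)/(1-2/p)))
      with hE
    have hE0 : 0 ≤ E := mul_nonneg hD0 (le_trans zero_le_one (le_max_left _ _))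
    refine ⟨Real.sqrt (E + 1), Real.sqrt_pos.mpr (by linarith), ?_⟩
    intro u v hu hv _ hNe
    rw [Real.sq_sqrt (by linarith : (0:ℝ) ≤ E + 1)]
    have h := key β hβ u v hu hv hNe
    linarith
  · set E : ℝ := Dc Ω p l1 l2 * max 1 ((Dc Ω p l1 l2 / (1 - 0)) ^ ((2/p)/(1-2/p))) with hE
    have hE0 : 0 ≤ E := mul_nonneg hD0 (le_trans zero_le_one (le_max_left _ _))
    refine ⟨Real.sqrt (E + 1), Real.sqrt_pos.mpr (by linarith), ?_⟩
    intro β hβ0 u v hu hv _ hNe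
    rw [Real.sq_sqrt (by linarith : (0:ℝ) ≤ E + 1)]
    have h := key β (lt_of_le_of_lt hβ0 one_pos) u v hu hv hNe
    rw [max_eq_right hβ0] at h
    linarith
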